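/- Let (P_t)_{t≥0}, (D_t)_{t≥1}, (q_t)_{t≥0} be real sequences with q_0 = 1, q_t > 0, P_t > 0 and D_t ≥ 0 for all t, satisfying the no-arbitrage condition q_t·P_t = q_{t+1}·(P_{t+1} + D_{t+1}) for all t ≥ 0. Then the limit lim_{T→∞} q_T·P_T exists, and this limit is strictly positive if and only if ∑_{t=1}^∞ D_t/P_t < ∞. (Bubble Characterization Lemma.) -/

import Mathlib

open Filter Topology

/-- **Bubble Characterization Lemma.** Given price, dividend and date-0 price sequences
satisfying the no-arbitrage condition, the limit of `q T * P T` exists and is strictly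
positive if and only if the sum of dividend-price ratios is finite. -/
theorem bubble_characterization
    (P D q : ℕ → ℝ)
    (hq0 : q 0 = 1)
    (hq : ∀ t, 0 < q t)
    (hP : ∀ t, 0 < P t)
    (hD : ∀ t, 1 ≤ t → 0 ≤ D t)
    (noarb : ∀ t, q t * P t = q (t + 1) * (P (t + 1) + D (t + 1))) :
    ∃ L : ℝ, Tendsto (fun T => q T * P T) atTop (𝓝 L) ∧
      (0 < L ↔ Summable (fun t => D (t + 1) / P (t + 1))) := by
  set r : ℕ → ℝ := fun t => D (t + 1) / P (t + 1) with hrdef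
  have hr0 : ∀ t, 0 ≤ r t := fun t =>
    div_nonneg (hD _ (Nat.le_add_left 1 t)) (hP _).le
  set b : ℕ → ℝ := fun T => ∏ i ∈ Finset.range T, (1 + r i) with hbdef
  have hbsucc : ∀ n, b (n + 1) = b n * (1 + r n) := fun n =>
    Finset.prod_range_succ _ _
  have hb1 : ∀ T, 1 ≤ b T := by
    intro T
    induction T with
    | zero => simp [hbdef]
    | succ n ih =>
      rw [hbsucc n]
      nlinarith [hr0 n]
  have hbpos : ∀ T, 0 < b T := fun T => lt_of_lt_of_le one_pos (hb1 T)
  have hbmono : Monotone b := by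
    apply monotone_nat_of_le_succ
    intro n
    rw [hbsucc n]
    exact le_mul_of_one_le_right (hbpos n).le (by linarith [hr0 n])
  have key : ∀ T, q T * P T * b T = P 0 := by
    intro T
    induction T with
    | zero => simp [hbdef, hq0]
    | succ n ih =>
      have hPne : P (n + 1) ≠ 0 := (hP _).ne'
      have h1 : q (n + 1) * P (n + 1) * (1 + r n) = q n * P n := by
        have hn := noarb n
        simp only [hrdef]
        field_simp
        linear_combination (-1) * hn
      rw [hbsucc n]
      calc q (n + 1) * P (n + 1) * (b n * (1 + r n))
          = (q (n + 1) * P (n + 1) * (1 + r n)) * b n := by ring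
        _ = q n * P n * b n := by rw [h1]
        _ = P 0 := ih
  have keydiv : ∀ T, q T * P T = P 0 / b T := fun T =>
    (eq_div_iff (hbpos T).ne').mpr (key T)
  by_cases hsum : Summable r
  · have hble : ∀ T, b T ≤ Real.exp (∑' t, r t) := by
      intro T
      calc b T ≤ ∏ i ∈ Finset.range T, Real.exp (r i) :=
            Finset.prod_le_prod (fun i _ => by linarith [hr0 i])
              (fun i _ => by linarith [Real.add_one_le_exp (r i)])
        _ = Real.exp (∑ i ∈ Finset.range T, r i) := by
            rw [Real.exp_sum]
        _ ≤ Real.exp (∑' t, r t) := by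
            apply Real.exp_le_exp.mpr
            exact Summable.sum_le_tsum _ (fun i _ => hr0 i) hsum
    have hbdd : BddAbove (Set.range b) := by
      refine ⟨Real.exp (∑' t, r t), ?_⟩
      rintro x ⟨T, rfl⟩
      exact hble T
    have hB := tendsto_atTop_ciSup hbmono hbdd
    set B := ⨆ T, b T with hBdef
    have hB1 : 1 ≤ B := le_trans (hb1 0) (le_ciSup hbdd 0)
    have hBpos : 0 < B := lt_of_lt_of_le one_pos hB1
    refine ⟨P 0 / B, ?_, ?_⟩
    · have : Tendsto (fun T => P 0 / b T) atTop (𝓝 (P 0 / B)) :=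
        tendsto_const_nhds.div hB hBpos.ne'
      simpa only [keydiv] using this
    · exact ⟨fun _ => hsum, fun _ => div_pos (hP 0) hBpos⟩
  · have hs : Tendsto (fun T => ∑ i ∈ Finset.range T, r i) atTop atTop := by
      exact (not_summable_iff_tendsto_nat_atTop_of_nonneg hr0).mp hsum
    have hbge : ∀ T, ∑ i ∈ Finset.range T, r i ≤ b T := by
      intro T
      induction T with
      | zero => simp [hbdef]
      | succ n ih =>
        rw [hbsucc n, Finset.sum_range_succ]
        have h1 : b n * (1 + r n) = b n + b n * r n := by ring
        rw [h1]
        have : r n ≤ b n * r n :=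
          le_mul_of_one_le_left (hr0 n) (hb1 n)
        linarith
    have hbtop : Tendsto b atTop atTop :=
      tendsto_atTop_mono hbge hs
    refine ⟨0, ?_, ?_⟩
    · have : Tendsto (fun T => P 0 / b T) atTop (𝓝 0) :=
        Tendsto.div_atTop tendsto_const_nhds hbtop
      simpa only [keydiv] using this
    · exact ⟨fun h => absurd h (lt_irrefl 0), fun h => absurd h hsum⟩
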